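/- Let k > 0 and a > 0 be real numbers, and let R_k be the Litim regulator. Then ∫_{ℝ} dω / (ω² + a + R_k(ω))² = 2k/(k² + a)² + (π/2 − arctan(k/√a))/a^{3/2} − k/(a·(k² + a)). -/

import Mathlib

open MeasureTheory Real

/-- The Litim regulator at scale `k`: `R_k(ω) = (k² − ω²)·θ(k² − ω²)`. -/
noncomputable def litim (k ω : ℝ) : ℝ := if ω ^ 2 < k ^ 2 then k ^ 2 - ω ^ 2 else 0

/-- Integral of the squared Litim-regularized propagator:
`∫ dω / (ω² + a + R_k(ω))² = 2k/(k² + a)² + (π/2 − arctan(k/√a))/a^{3/2} − k/(a(k² + a))`. -/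
theorem integral_litim_propagator_sq (k a : ℝ) (hk : 0 < k) (ha : 0 < a) :
    ∫ ω : ℝ, 1 / (ω ^ 2 + a + litim k ω) ^ 2 =
      2 * k / (k ^ 2 + a) ^ 2 + (π / 2 - arctan (k / Real.sqrt a)) / Real.sqrt a ^ 3
        - k / (a * (k ^ 2 + a)) := by
  set c := Real.sqrt a with hc_def
  have hc : 0 < c := Real.sqrt_pos.2 ha
  have hc2 : c ^ 2 = a := Real.sq_sqrt ha.le
  set f : ℝ → ℝ := fun ω => 1 / (ω ^ 2 + a + litim k ω) ^ 2 with hf_def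
  set g : ℝ → ℝ := fun ω => 1 / (ω ^ 2 + a) ^ 2 with hg_def
  set F : ℝ → ℝ := fun ω => (ω / (ω ^ 2 + a)) / (2 * a) + arctan (ω / c) / (2 * a * c)
    with hF_def
  have hpos : ∀ ω : ℝ, 0 < ω ^ 2 + a := fun ω => by positivity
  -- derivative of F is g
  have hF : ∀ ω : ℝ, HasDerivAt F (g ω) ω := by
    intro ω
    have h1 : HasDerivAt (fun ω : ℝ => ω ^ 2 + a) (2 * ω) ω := by
      simpa using (hasDerivAt_pow 2 ω).add_const a
    have h2 : HasDerivAt (fun ω : ℝ => (ω / (ω ^ 2 + a)) / (2 * a))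
        (((1 * (ω ^ 2 + a) - ω * (2 * ω)) / (ω ^ 2 + a) ^ 2) / (2 * a)) ω :=
      ((hasDerivAt_id ω).div h1 (hpos ω).ne').div_const _
    have h3 : HasDerivAt (fun ω : ℝ => arctan (ω / c) / (2 * a * c))
        (((1 / (1 + (ω / c) ^ 2)) * (1 / c)) / (2 * a * c)) ω := by
      have := (Real.hasDerivAt_arctan (ω / c)).comp ω ((hasDerivAt_id ω).div_const c)
      simpa using this.div_const (2 * a * c)
    have h4 : HasDerivAt F _ ω := h2.add h3
    convert h4 using 1
    have h5 : 1 + (ω / c) ^ 2 = (ω ^ 2 + a) / a := by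
      field_simp
      linear_combination (-ω ^ 2) * hc2
    rw [hg_def]
    rw [h5]
    field_simp
    linear_combination (ω ^ 2 + a) * hc2
  -- nonnegativity of g
  have hgpos : ∀ ω : ℝ, 0 ≤ g ω := fun ω => by positivity
  -- limit of F at infinity
  have hlim : Filter.Tendsto F Filter.atTop (nhds (π / (4 * a * c))) := by
    have t1 : Filter.Tendsto (fun ω : ℝ => ω / (ω ^ 2 + a)) Filter.atTop (nhds 0) := by
      have ht : Filter.Tendsto (fun ω : ℝ => ω + a / ω) Filter.atTop Filter.atTop := by
        apply Filter.Tendsto.atTop_add_zero_eventuallyLE Filter.tendsto_id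
        filter_upwards [Filter.eventually_gt_atTop 0] with x hx
        positivity
      have := ht.inv_tendsto_atTop
      apply this.congr'
      filter_upwards [Filter.eventually_gt_atTop 0] with x hx
      have hx0 : x ≠ 0 := hx.ne'
      have hxx : x + a / x = (x ^ 2 + a) / x := by
        field_simp
      rw [Pi.inv_apply, hxx, inv_div]
    have t2 : Filter.Tendsto (fun ω : ℝ => arctan (ω / c)) Filter.atTop (nhds (π / 2)) := by
      have hdiv : Filter.Tendsto (fun ω : ℝ => ω / c) Filter.atTop Filter.atTop :=
        Filter.Tendsto.atTop_div_const hc Filter.tendsto_id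
      exact (tendsto_nhds_of_tendsto_nhdsWithin Real.tendsto_arctan_atTop).comp hdiv
    have := (t1.div_const (2 * a)).add (t2.div_const (2 * a * c))
    rw [show (0:ℝ) / (2 * a) + π / 2 / (2 * a * c) = π / (4 * a * c) by
      rw [zero_div, zero_add, div_div]; ring_nf] at this
    exact this
  -- evaluation on Ioi k
  have hIoi_g : ∫ x in Set.Ioi k, g x = π / (4 * a * c) - F k :=
    integral_Ioi_of_hasDerivAt_of_nonneg' (fun x _ => hF x)
      (fun x _ => hgpos x) hlim
  have hint_g : IntegrableOn g (Set.Ioi k) :=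
    integrableOn_Ioi_deriv_of_nonneg' (fun x _ => hF x) (fun x _ => hgpos x) hlim
  -- f = g on Ioi k
  have hfg : ∀ x ∈ Set.Ioi k, f x = g x := by
    intro x hx
    have hx2 : k ^ 2 < x ^ 2 := by
      have hx' : k < x := hx
      nlinarith
    simp [hf_def, hg_def, litim, not_lt.2 hx2.le]
  have hIoi : ∫ x in Set.Ioi k, f x = π / (4 * a * c) - F k := by
    rw [setIntegral_congr_fun measurableSet_Ioi hfg]; exact hIoi_g
  have hint_Ioi : IntegrableOn f (Set.Ioi k) := by
    exact (integrableOn_congr_fun hfg measurableSet_Ioi).2 hint_g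
  -- f is even
  have hfeven : ∀ x : ℝ, f (-x) = f x := by
    intro x; simp [hf_def, litim, neg_sq]
  -- Iic (-k) part
  have hIic : ∫ x in Set.Iic (-k), f x = π / (4 * a * c) - F k := by
    have h := integral_comp_neg_Iic (-k) f
    rw [neg_neg] at h
    calc ∫ x in Set.Iic (-k), f x = ∫ x in Set.Iic (-k), f (-x) :=
          (setIntegral_congr_fun measurableSet_Iic fun x _ => hfeven x).symm
      _ = ∫ x in Set.Ioi k, f x := h
      _ = π / (4 * a * c) - F k := hIoi
  have hint_Iic : IntegrableOn f (Set.Iic (-k)) := by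
    have A : MeasurableEmbedding (fun x : ℝ => -x) :=
      (Homeomorph.neg ℝ).isClosedEmbedding.measurableEmbedding
    have hpre : (fun x : ℝ => -x) ⁻¹' Set.Iio (-k) = Set.Ioi k := by
      ext x; simp [lt_neg]
    rw [IntegrableOn, ← Measure.restrict_congr_set MeasureTheory.Iio_ae_eq_Iic,
      show (volume : Measure ℝ) = Measure.map (fun x : ℝ => -x) volume from
        (Measure.map_neg_eq_self _).symm,
      Measure.restrict_map A.measurable measurableSet_Iio, hpre, A.integrable_map_iff]
    exact hint_Ioi.congr_fun (fun x _ => (hfeven x).symm) measurableSet_Ioi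
  -- Ioc (-k) k part: f is constant there
  have hconst : ∀ x ∈ Set.Ioc (-k) k, f x = 1 / (k ^ 2 + a) ^ 2 := by
    intro x hx
    have hx2 : x ^ 2 ≤ k ^ 2 := sq_le_sq' hx.1.le hx.2
    rcases lt_or_eq_of_le hx2 with h | h
    · simp [hf_def, litim, h]
      ring_nf
    · simp [hf_def, litim, h, not_lt.2 (le_of_eq h.symm)]
  have hIoc : ∫ x in Set.Ioc (-k) k, f x = (k + k) * (1 / (k ^ 2 + a) ^ 2) := by
    rw [setIntegral_congr_fun measurableSet_Ioc hconst, setIntegral_const]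
    rw [measureReal_def, Real.volume_Ioc]
    rw [ENNReal.toReal_ofReal (by linarith)]
    rw [smul_eq_mul]
    ring_nf
  have hint_Ioc : IntegrableOn f (Set.Ioc (-k) k) := by
    refine (integrableOn_congr_fun hconst measurableSet_Ioc).2 ?_
    exact integrableOn_const measure_Ioc_lt_top.ne
  -- assemble
  have hIick : IntegrableOn f (Set.Iic k) := by
    have := hint_Iic.union hint_Ioc
    rwa [Set.Iic_union_Ioc_eq_Iic (by linarith)] at this
  have hInt : Integrable f := by
    rw [← integrableOn_univ, ← Set.Iic_union_Ioi (a := k)]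
    exact hIick.union hint_Ioi
  have hsplit : ∫ ω : ℝ, f ω = (∫ x in Set.Iic k, f x) + ∫ x in Set.Ioi k, f x :=
    (intervalIntegral.integral_Iic_add_Ioi hIick hint_Ioi).symm
  have hsplit2 : ∫ x in Set.Iic k, f x =
      (∫ x in Set.Iic (-k), f x) + ∫ x in Set.Ioc (-k) k, f x := by
    rw [← Set.Iic_union_Ioc_eq_Iic (show -k ≤ k by linarith)]
    exact setIntegral_union (Set.Iic_disjoint_Ioc le_rfl) measurableSet_Ioc hint_Iic hint_Ioc
  rw [show (∫ ω : ℝ, 1 / (ω ^ 2 + a + litim k ω) ^ 2) = ∫ ω : ℝ, f ω from rfl]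
  rw [hsplit, hsplit2, hIic, hIoc, hIoi]
  -- final arithmetic
  have hc3 : c ^ 3 = a * c := by rw [pow_succ, hc2]
  rw [hF_def, hc3]
  have hka : (0:ℝ) < k ^ 2 + a := by positivity
  field_simp
  ring
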